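/- Fix p ∈ ℝ that is not a positive integer. For every x < 0, the hypergeometric series ₂F₁(1, 1−p; 2−p; −eˣ) = Σ_{n=0}^{∞} [(1)ₙ (1−p)ₙ / ((2−p)ₙ · n!)] (−eˣ)ⁿ converges, and the function G(x) = (e^{(1−p)x}/(1−p)) · ₂F₁(1, 1−p; 2−p; −eˣ) is differentiable on (−∞, 0) with derivative G′(x) = e^{(1−p)x}/(eˣ + 1), i.e., G is an antiderivative of the Laplace integrand S(x)e^{-px} of the Sigmoid function S(x) = eˣ/(eˣ+1). -/

import Mathlib

/-- The Pochhammer (ascending factorial) symbol `(a)ₙ = a(a+1)⋯(a+n-1)` in `ℝ`. -/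
noncomputable def pochhammerR (a : ℝ) (n : ℕ) : ℝ := (ascPochhammer ℝ n).eval a

/-- The `n`-th term of the Gauss hypergeometric series
`₂F₁(1, 1-p; 2-p; z) = Σₙ (1)ₙ(1-p)ₙ zⁿ / ((2-p)ₙ n!)`. -/
noncomputable def sigmoidLaplaceTerm (p : ℝ) (z : ℝ) (n : ℕ) : ℝ :=
  pochhammerR 1 n * pochhammerR (1 - p) n
    / (pochhammerR (2 - p) n * (Nat.factorial n)) * z ^ n

lemma pochhammerR_key (p : ℝ) (n : ℕ) :
    pochhammerR (2 - p) n * (1 - p) = pochhammerR (1 - p) n * ((n : ℝ) + 1 - p) := by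
  induction n with
  | zero => simp [pochhammerR]
  | succ n ih =>
    simp only [pochhammerR, ascPochhammer_succ_eval] at ih ⊢
    push_cast
    linear_combination (2 - p + (n : ℝ)) * ih

lemma pochhammerR_two_sub_ne (p : ℝ) (hp : ∀ n : ℕ, 0 < n → p ≠ (n : ℝ)) (n : ℕ) :
    pochhammerR (2 - p) n ≠ 0 := by
  induction n with
  | zero => simp [pochhammerR]
  | succ n ih =>
    simp only [pochhammerR, ascPochhammer_succ_eval] at ih ⊢
    refine mul_ne_zero ih ?_
    have := hp (n + 2) (by omega)
    intro h
    apply this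
    push_cast
    linarith

lemma aux_an_ne (p : ℝ) (hp : ∀ n : ℕ, 0 < n → p ≠ (n : ℝ)) (n : ℕ) :
    (n : ℝ) + 1 - p ≠ 0 := by
  have := hp (n + 1) (by omega)
  intro h
  apply this
  push_cast
  linarith

lemma sigmoidLaplaceTerm_eq (p : ℝ) (hp : ∀ n : ℕ, 0 < n → p ≠ (n : ℝ)) (z : ℝ) (n : ℕ) :
    sigmoidLaplaceTerm p z n = (1 - p) / ((n : ℝ) + 1 - p) * z ^ n := by
  have h1 : pochhammerR 1 n = (Nat.factorial n : ℝ) := by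
    simp [pochhammerR, ascPochhammer_eval_one]
  have h2 := pochhammerR_key p n
  have h3 := pochhammerR_two_sub_ne p hp n
  have h4 := aux_an_ne p hp n
  have h5 : (Nat.factorial n : ℝ) ≠ 0 := Nat.cast_ne_zero.2 (Nat.factorial_ne_zero n)
  unfold sigmoidLaplaceTerm
  rw [h1]
  have : (Nat.factorial n : ℝ) * pochhammerR (1 - p) n
      / (pochhammerR (2 - p) n * (Nat.factorial n)) = (1 - p) / ((n : ℝ) + 1 - p) := by
    field_simp
    nlinarith [h2]
  rw [this]

/-- **Laplace transform of the Sigmoid (paper Thm 4.2).** Fix `p ∈ ℝ` not a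
positive integer. For `x < 0` the hypergeometric series `₂F₁(1, 1-p; 2-p; -eˣ)`
converges, and `G(x) = (e^{(1-p)x}/(1-p)) · ₂F₁(1, 1-p; 2-p; -eˣ)` is
differentiable on `(-∞, 0)` with derivative `e^{(1-p)x}/(eˣ+1)`, the Laplace
integrand `S(x)e^{-px}` of the Sigmoid `S(x) = eˣ/(eˣ+1)`. -/
theorem sigmoid_laplace_antideriv (p : ℝ) (hp : ∀ n : ℕ, 0 < n → p ≠ (n : ℝ)) :
    ∀ x : ℝ, x < 0 →
      Summable (fun n => sigmoidLaplaceTerm p (-Real.exp x) n)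
        ∧ HasDerivAt
            (fun t : ℝ =>
              Real.exp ((1 - p) * t) / (1 - p)
                * ∑' n, sigmoidLaplaceTerm p (-Real.exp t) n)
            (Real.exp ((1 - p) * x) / (Real.exp x + 1)) x := by
  intro x hx
  set a : ℕ → ℝ := fun n => (n : ℝ) + 1 - p with ha_def
  have ha : ∀ n, a n ≠ 0 := aux_an_ne p hp
  have h1p : (1 : ℝ) - p ≠ 0 := by
    have := aux_an_ne p hp 0; simpa using this
  -- eventual lower bound on |a n|
  have haN : ∀ n : ℕ, n ≥ ⌈p⌉₊ → (1 : ℝ) ≤ |a n| := by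
    intro n hn
    have h1 : p ≤ (⌈p⌉₊ : ℝ) := Nat.le_ceil p
    have h2 : ((⌈p⌉₊ : ℕ) : ℝ) ≤ (n : ℝ) := Nat.cast_le.2 hn
    have : (1 : ℝ) ≤ a n := by simp only [ha_def]; linarith
    calc (1 : ℝ) ≤ a n := this
      _ ≤ |a n| := le_abs_self _
  -- geometric facts
  have hex1 : Real.exp x < 1 := by
    rw [Real.exp_lt_one_iff]; exact hx
  have hexpow : Summable (fun n : ℕ => Real.exp x ^ n) :=
    summable_geometric_of_lt_one (Real.exp_nonneg x) hex1
  -- Part 1: summability of the hypergeometric series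
  have hsum1 : Summable (fun n => sigmoidLaplaceTerm p (-Real.exp x) n) := by
    apply Summable.of_norm_bounded_eventually (g := fun n : ℕ => |1 - p| * Real.exp x ^ n)
      (hexpow.mul_left _)
    rw [Nat.cofinite_eq_atTop, Filter.eventually_atTop]
    refine ⟨⌈p⌉₊, fun n hn => ?_⟩
    rw [sigmoidLaplaceTerm_eq p hp]
    have h1 := haN n hn
    have hane := ha n
    rw [norm_mul, norm_pow, norm_neg, Real.norm_of_nonneg (Real.exp_nonneg x)]
    gcongr
    rw [norm_div, Real.norm_eq_abs, Real.norm_eq_abs]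
    calc |1 - p| / |a n| ≤ |1 - p| / 1 := by
          apply div_le_div_of_nonneg_left (abs_nonneg _) one_pos h1
      _ = |1 - p| := div_one _
  refine ⟨hsum1, ?_⟩
  -- the reindexed series
  set f : ℕ → ℝ → ℝ := fun n t => (-1 : ℝ) ^ n * Real.exp (a n * t) / a n with hf_def
  set f' : ℕ → ℝ → ℝ := fun n t => (-1 : ℝ) ^ n * Real.exp (a n * t) with hf'_def
  set u : ℕ → ℝ := fun n => Real.exp (a n * (2 * x)) + Real.exp (a n * (x / 2)) with hu_def
  have hb : (2 * x) < x := by linarith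
  have hc : x < x / 2 := by linarith
  have hc0 : x / 2 < 0 := by linarith
  -- summability of u
  have hu_sum : Summable u := by
    have key : ∀ y : ℝ, y < 0 → Summable (fun n : ℕ => Real.exp (a n * y)) := by
      intro y hy
      have hey : Real.exp y < 1 := by rw [Real.exp_lt_one_iff]; exact hy
      apply Summable.of_norm_bounded (g := fun n : ℕ => Real.exp ((1 - p) * y) * Real.exp y ^ n)
        ((summable_geometric_of_lt_one (Real.exp_nonneg y) hey).mul_left _)
      intro n
      rw [Real.norm_of_nonneg (Real.exp_nonneg _), ← Real.exp_nat_mul, ← Real.exp_add]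
      apply le_of_eq
      congr 1
      simp only [ha_def]; ring
    exact (key (2 * x) (by linarith)).add (key (x / 2) hc0)
  -- derivative of each term
  have hg : ∀ n y, HasDerivAt (f n) (f' n y) y := by
    intro n y
    have h1 : HasDerivAt (fun t : ℝ => a n * t) (a n) y := by
      simpa using (hasDerivAt_id y).const_mul (a n)
    have h2 : HasDerivAt (fun t : ℝ => Real.exp (a n * t)) (Real.exp (a n * y) * a n) y :=
      h1.exp
    have h3 := (h2.div_const (a n)).const_mul ((-1 : ℝ) ^ n)
    have h4 : f n = fun t : ℝ => (-1 : ℝ) ^ n * (Real.exp (a n * t) / a n) := by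
      funext t
      show (-1 : ℝ) ^ n * Real.exp (a n * t) / a n = _
      ring
    have h5 : f' n y = (-1 : ℝ) ^ n * (Real.exp (a n * y) * a n / a n) := by
      show (-1 : ℝ) ^ n * Real.exp (a n * y) = _
      rw [mul_div_cancel_right₀ _ (ha n)]
    rw [h4, h5]
    exact h3
  -- bound on derivatives on Ioo (2x) (x/2)
  have hg' : ∀ n y, y ∈ Set.Ioo (2 * x) (x / 2) → ‖f' n y‖ ≤ u n := by
    intro n y hy
    have : ‖f' n y‖ = Real.exp (a n * y) := by
      simp only [hf'_def, Real.norm_eq_abs, abs_mul, abs_pow, abs_neg, abs_one, one_pow,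
        one_mul, Real.abs_exp]
    rw [this]
    rcases le_or_gt 0 (a n) with h | h
    · calc Real.exp (a n * y) ≤ Real.exp (a n * (x / 2)) := by
            apply Real.exp_le_exp.2
            exact mul_le_mul_of_nonneg_left hy.2.le h
        _ ≤ u n := le_add_of_nonneg_left (Real.exp_nonneg _)
    · calc Real.exp (a n * y) ≤ Real.exp (a n * (2 * x)) := by
            apply Real.exp_le_exp.2
            exact mul_le_mul_of_nonpos_left hy.1.le h.le
        _ ≤ u n := le_add_of_nonneg_right (Real.exp_nonneg _)
  -- summability at x
  have hx_mem : x ∈ Set.Ioo (2 * x) (x / 2) := ⟨hb, hc⟩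
  have hg0 : Summable (fun n => f n x) := by
    apply Summable.of_norm_bounded_eventually (g := u) hu_sum
    rw [Nat.cofinite_eq_atTop, Filter.eventually_atTop]
    refine ⟨⌈p⌉₊, fun n hn => ?_⟩
    have h1 := haN n hn
    have : ‖f n x‖ = Real.exp (a n * x) / |a n| := by
      simp only [hf_def, Real.norm_eq_abs, abs_div, abs_mul, abs_pow, abs_neg, abs_one,
        one_pow, one_mul, Real.abs_exp]
    rw [this]
    calc Real.exp (a n * x) / |a n| ≤ Real.exp (a n * x) / 1 := by
          apply div_le_div_of_nonneg_left (Real.exp_nonneg _) one_pos h1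
      _ = Real.exp (a n * x) := div_one _
      _ = ‖f' n x‖ := by
          simp only [hf'_def, Real.norm_eq_abs, abs_mul, abs_pow, abs_neg, abs_one, one_pow,
            one_mul, Real.abs_exp]
      _ ≤ u n := hg' n x hx_mem
  -- term-by-term differentiation
  have hder : HasDerivAt (fun z => ∑' n, f n z) (∑' n, f' n x) x :=
    hasDerivAt_tsum_of_isPreconnected hu_sum isOpen_Ioo
      (convex_Ioo _ _).isPreconnected (fun n y _ => hg n y) hg' hx_mem hg0 hx_mem
  -- identify the derivative value
  have hval : (∑' n, f' n x) = Real.exp ((1 - p) * x) / (Real.exp x + 1) := by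
    have hterm : ∀ n : ℕ, f' n x = Real.exp ((1 - p) * x) * (-Real.exp x) ^ n := by
      intro n
      simp only [hf'_def]
      rw [show a n * x = (1 - p) * x + (n : ℝ) * x from by simp only [ha_def]; ring,
        Real.exp_add, Real.exp_nat_mul, neg_pow]
      ring
    rw [tsum_congr hterm, tsum_mul_left, tsum_geometric_of_norm_lt_one (by
      rw [norm_neg, Real.norm_of_nonneg (Real.exp_nonneg x)]; exact hex1)]
    rw [sub_neg_eq_add, div_eq_mul_inv, add_comm]
  rw [← hval]
  -- the statement function agrees with the reindexed series near x
  apply hder.congr_of_eventuallyEq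
  have hmem : Set.Iio (0 : ℝ) ∈ nhds x := Iio_mem_nhds hx
  filter_upwards [hmem] with t ht
  have het1 : Real.exp t < 1 := by rw [Real.exp_lt_one_iff]; exact ht
  have hterm : ∀ n : ℕ, sigmoidLaplaceTerm p (-Real.exp t) n
      = (1 - p) / a n * (-Real.exp t) ^ n := fun n => sigmoidLaplaceTerm_eq p hp _ n
  rw [tsum_congr hterm, ← tsum_mul_left]
  apply tsum_congr
  intro n
  have han : ((n : ℝ) + 1 - p) ≠ 0 := ha n
  simp only [hf_def, ha_def]
  rw [show ((n : ℝ) + 1 - p) * t = (1 - p) * t + (n : ℝ) * t from by ring,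
    Real.exp_add, Real.exp_nat_mul, neg_pow]
  field_simp [han, h1p]
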